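/- Hereditary substitution of an η-expanded variable vanishes up to weak equality: if γ ⊢ K kd simply (in shape context γ) and γ, X:|K|, δ ⊢ V : j in simple kinding, then V[X := η-expand_K(X)]_{|K|} ≈ V; the analogous statements hold for simply well-formed kinds and spines. -/
import Mathlib


set_option autoImplicit true
set_option maxHeartbeats 1000000
set_option linter.unusedVariables false

/-- Shapes (simple kinds): `k ::= ∗ | k → k`. -/
inductive SKind : Type
  | star
  | arr (j k : SKind)
/-! ## Spine-form syntax of Fω.. types and kinds (de Bruijn representation). -/

mutual
/-- Eliminations: a head applied to a spine of arguments, `E ::= F E⃗`. -/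
inductive SpTy : Type
  | elim (h : SpHead) (s : SpSpine)

/-- Heads: `F ::= X | ⊤ | ⊥ | D → E | ∀X:K.E | λX:K.E`. -/
inductive SpHead : Type
  | var (x : ℕ)
  | top
  | bot
  | arr (a b : SpTy)
  | all (k : SpKd) (a : SpTy)
  | lam (k : SpKd) (a : SpTy)

/-- Spines: finite sequences of eliminations. -/
inductive SpSpine : Type
  | nil
  | cons (a : SpTy) (s : SpSpine)

/-- Kinds in spine form: `K ::= A..B | (X:J)→K`. -/
inductive SpKd : Type
  | intv (a b : SpTy)
  | pi (j k : SpKd)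
end

/-- Shape erasure of spine-form kinds: `|A..B| = ∗`, `|(X:J)→K| = |J| → |K|`. -/
def SpKd.shape : SpKd → SKind
  | .intv _ _ => .star
  | .pi j k => .arr j.shape k.shape

/-- Spine concatenation. -/
def SpSpine.append : SpSpine → SpSpine → SpSpine
  | .nil, s' => s'
  | .cons a s, s' => .cons a (s.append s')

/-- (Non-reducing) application of an elimination to a spine. -/
def SpTy.appSp : SpTy → SpSpine → SpTy
  | .elim h s, s' => .elim h (s.append s')

/-- (Non-reducing) application of an elimination to a single argument. -/
def SpTy.app1 (e d : SpTy) : SpTy := e.appSp (.cons d .nil)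

mutual
/-- Shift: increment all variables `≥ c` by one. -/
def SpTy.shift (c : ℕ) : SpTy → SpTy
  | .elim h s => .elim (h.shift c) (s.shift c)

def SpHead.shift (c : ℕ) : SpHead → SpHead
  | .var x => if x < c then .var x else .var (x + 1)
  | .top => .top
  | .bot => .bot
  | .arr a b => .arr (a.shift c) (b.shift c)
  | .all k a => .all (k.shift c) (a.shift (c + 1))
  | .lam k a => .lam (k.shift c) (a.shift (c + 1))

def SpSpine.shift (c : ℕ) : SpSpine → SpSpine
  | .nil => .nil
  | .cons a s => .cons (a.shift c) (s.shift c)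

def SpKd.shift (c : ℕ) : SpKd → SpKd
  | .intv a b => .intv (a.shift c) (b.shift c)
  | .pi j k => .pi (j.shift c) (k.shift (c + 1))
end

/-- Weakening by `n` fresh innermost variables. -/
def SpTy.weaken (n : ℕ) (e : SpTy) : SpTy := (SpTy.shift 0)^[n] e

/-- Weakening of kinds by `n` fresh innermost variables. -/
def SpKd.weaken (n : ℕ) (k : SpKd) : SpKd := (SpKd.shift 0)^[n] k

mutual
/-- Ordinary (capture-avoiding, non-hereditary) substitution on spine form. -/
def SpTy.subst : SpTy → ℕ → SpTy → SpTy
  | .elim (.var y) s, x, v =>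
      if y = x then v.appSp (s.subst x v)
      else .elim (.var (if x < y then y - 1 else y)) (s.subst x v)
  | .elim .top s, x, v => .elim .top (s.subst x v)
  | .elim .bot s, x, v => .elim .bot (s.subst x v)
  | .elim (.arr a b) s, x, v => .elim (.arr (a.subst x v) (b.subst x v)) (s.subst x v)
  | .elim (.all k a) s, x, v =>
      .elim (.all (k.subst x v) (a.subst (x + 1) (v.shift 0))) (s.subst x v)
  | .elim (.lam k a) s, x, v =>
      .elim (.lam (k.subst x v) (a.subst (x + 1) (v.shift 0))) (s.subst x v)

def SpSpine.subst : SpSpine → ℕ → SpTy → SpSpine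
  | .nil, _, _ => .nil
  | .cons a s, x, v => .cons (a.subst x v) (s.subst x v)

def SpKd.subst : SpKd → ℕ → SpTy → SpKd
  | .intv a b, x, v => .intv (a.subst x v) (b.subst x v)
  | .pi j k, x, v => .pi (j.subst x v) (k.subst (x + 1) (v.shift 0))
end

mutual
/-- Hereditary substitution `e[x := v]_k` of the elimination `v` for variable
`x` at shape `k`, defined mutually with reducing application by recursion on
the shape `k`. -/
def SpTy.hsubst : SpTy → ℕ → SKind → SpTy → SpTy
  | .elim (.var y) s, x, k, v =>
      if y = x then SpTy.rappSp v k (s.hsubst x k v)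
      else .elim (.var (if x < y then y - 1 else y)) (s.hsubst x k v)
  | .elim .top s, x, k, v => .elim .top (s.hsubst x k v)
  | .elim .bot s, x, k, v => .elim .bot (s.hsubst x k v)
  | .elim (.arr a b) s, x, k, v =>
      .elim (.arr (a.hsubst x k v) (b.hsubst x k v)) (s.hsubst x k v)
  | .elim (.all j a) s, x, k, v =>
      .elim (.all (j.hsubst x k v) (a.hsubst (x + 1) k (v.shift 0))) (s.hsubst x k v)
  | .elim (.lam j a) s, x, k, v =>
      .elim (.lam (j.hsubst x k v) (a.hsubst (x + 1) k (v.shift 0))) (s.hsubst x k v)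
termination_by e x k v => (sizeOf k, 1, sizeOf e)

/-- Hereditary substitution in spines (pointwise). -/
def SpSpine.hsubst : SpSpine → ℕ → SKind → SpTy → SpSpine
  | .nil, _, _, _ => .nil
  | .cons a s, x, k, v => .cons (a.hsubst x k v) (s.hsubst x k v)
termination_by s x k v => (sizeOf k, 1, sizeOf s)

/-- Hereditary substitution in kinds. -/
def SpKd.hsubst : SpKd → ℕ → SKind → SpTy → SpKd
  | .intv a b, x, k, v => .intv (a.hsubst x k v) (b.hsubst x k v)
  | .pi j k', x, k, v => .pi (j.hsubst x k v) (k'.hsubst (x + 1) k (v.shift 0))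
termination_by K x k v => (sizeOf k, 1, sizeOf K)

/-- Reducing application `d ·_k v` to a single argument:  β-contracts when `d`
is an operator abstraction and `k` is an arrow shape. -/
def SpTy.rapp : SpTy → SKind → SpTy → SpTy
  | d, .star, v => d.app1 v
  | .elim (.lam _ d') .nil, .arr k1 _, v => d'.hsubst 0 k1 v
  | .elim (.var y) s, .arr _ _, v => SpTy.app1 (.elim (.var y) s) v
  | .elim .top s, .arr _ _, v => SpTy.app1 (.elim .top s) v
  | .elim .bot s, .arr _ _, v => SpTy.app1 (.elim .bot s) v
  | .elim (.arr a b) s, .arr _ _, v => SpTy.app1 (.elim (.arr a b) s) v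
  | .elim (.all j a) s, .arr _ _, v => SpTy.app1 (.elim (.all j a) s) v
  | .elim (.lam j a) (.cons b s), .arr _ _, v => SpTy.app1 (.elim (.lam j a) (.cons b s)) v
termination_by d k v => (sizeOf k, 0, 0)

/-- Reducing application `d ·_k s⃗` to a spine, unwinding `s⃗` along `k`. -/
def SpTy.rappSp : SpTy → SKind → SpSpine → SpTy
  | d, _, .nil => d
  | d, .arr k1 k2, .cons e es => SpTy.rappSp (d.rapp (.arr k1 k2) e) k2 es
  | d, .star, .cons e es => d.appSp (.cons e es)
termination_by d k s => (sizeOf k, 0, sizeOf s + 1)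
end
/-! ## Simple kinding of β-normal η-long types in shape contexts.
A shape context assigns shapes to type-variable bindings (`some k`) and
marks term-variable bindings with `none`. -/

abbrev SCtx := List (Option SKind)

mutual
/-- Simply well-formed normal kinds: `γ ⊢ K kd`. -/
inductive SWfKd : SCtx → SpKd → Prop
  | intv : SKTy γ U .star → SKTy γ V .star → SWfKd γ (.intv U V)
  | pi : SWfKd γ J → SWfKd (some J.shape :: γ) K → SWfKd γ (.pi J K)

/-- Simple kinding of neutral types: `γ ⊢ne N : k` (a variable head applied
to a simply kinded spine). -/
inductive SKNe : SCtx → SpTy → SKind → Prop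
  | varApp : γ[x]? = some (some j) → SSp γ j s k → SKNe γ (.elim (.var x) s) k

/-- Simple spine kinding: `γ ⊢ j : V⃗ : k` — applying an operator of shape `j`
to the spine `V⃗` yields a type of shape `k`. -/
inductive SSp : SCtx → SKind → SpSpine → SKind → Prop
  | nil : SSp γ k .nil k
  | cons : SKTy γ U j → SSp γ k s l → SSp γ (.arr j k) (.cons U s) l

/-- Simple kinding of normal types: `γ ⊢ V : k`. -/
inductive SKTy : SCtx → SpTy → SKind → Prop
  | top : SKTy γ (.elim .top .nil) .star
  | bot : SKTy γ (.elim .bot .nil) .star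
  | arr : SKTy γ U .star → SKTy γ V .star → SKTy γ (.elim (.arr U V) .nil) .star
  | all : SWfKd γ K → SKTy (some K.shape :: γ) V .star →
      SKTy γ (.elim (.all K V) .nil) .star
  | lam : SWfKd γ J → SKTy (some J.shape :: γ) V k →
      SKTy γ (.elim (.lam J V) .nil) (.arr J.shape k)
  | ne : SKNe γ N .star → SKTy γ N .star
end
/-! ## Weak equality `≈` on spine-form types and kinds: the congruence that
identifies operator abstractions up to the *shape* of their domain
annotations:  `λX:J.A ≈ λX:K.B` whenever `|J| ≡ |K|` and `A ≈ B`. -/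

mutual
inductive WEqTy : SpTy → SpTy → Prop
  | elim : WEqHead h₁ h₂ → WEqSp s₁ s₂ → WEqTy (.elim h₁ s₁) (.elim h₂ s₂)

inductive WEqHead : SpHead → SpHead → Prop
  | var : WEqHead (.var x) (.var x)
  | top : WEqHead .top .top
  | bot : WEqHead .bot .bot
  | arr : WEqTy a₁ a₂ → WEqTy b₁ b₂ → WEqHead (.arr a₁ b₁) (.arr a₂ b₂)
  | all : WEqKd k₁ k₂ → WEqTy a₁ a₂ → WEqHead (.all k₁ a₁) (.all k₂ a₂)
  | lam : k₁.shape = k₂.shape → WEqTy a₁ a₂ → WEqHead (.lam k₁ a₁) (.lam k₂ a₂)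

inductive WEqSp : SpSpine → SpSpine → Prop
  | nil : WEqSp .nil .nil
  | cons : WEqTy a₁ a₂ → WEqSp s₁ s₂ → WEqSp (.cons a₁ s₁) (.cons a₂ s₂)

inductive WEqKd : SpKd → SpKd → Prop
  | intv : WEqTy a₁ a₂ → WEqTy b₁ b₂ → WEqKd (.intv a₁ b₁) (.intv a₂ b₂)
  | pi : WEqKd j₁ j₂ → WEqKd k₁ k₂ → WEqKd (.pi j₁ k₁) (.pi j₂ k₂)
end
/-- η-expansion of a type along a kind: `η_{A..B}(D) = D` and
`η_{(X:J)→K}(D) = λX:J. η_K (D (η_J X))` for `X` fresh (in de Bruijn form the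
subject is shifted under the new binder). -/
def etaExp : SpKd → SpTy → SpTy
  | .intv _ _, a => a
  | .pi J K, a =>
      .elim (.lam J (etaExp K ((a.shift 0).app1 (etaExp J (.elim (.var 0) .nil))))) .nil
/-! ### Auxiliary: canonical kinds, shapes, append, basic commutations -/

def canonKd : SKind → SpKd
  | .star => .intv (.elim .top .nil) (.elim .bot .nil)
  | .arr j k => .pi (canonKd j) (canonKd k)

theorem canonKd_shape : ∀ k, (canonKd k).shape = k
  | .star => rfl
  | .arr j k => by simp [canonKd, SpKd.shape, canonKd_shape j, canonKd_shape k]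

theorem canonKd_wf : ∀ (γ : SCtx) k, SWfKd γ (canonKd k)
  | γ, .star => .intv .top .bot
  | γ, .arr j k => .pi (canonKd_wf γ j) (canonKd_wf _ k)

theorem shape_shift : ∀ (K : SpKd) (c : ℕ), (K.shift c).shape = K.shape
  | .intv _ _, _ => rfl
  | .pi j k, c => by simp [SpKd.shift, SpKd.shape, shape_shift j, shape_shift k]

theorem shape_hsubst : ∀ (K : SpKd) x k v, (K.hsubst x k v).shape = K.shape
  | .intv _ _, _, _, _ => by simp [SpKd.hsubst, SpKd.shape]
  | .pi j K', x, k, v => by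
      simp [SpKd.hsubst, SpKd.shape, shape_hsubst j, shape_hsubst K']

theorem weaken_shape : ∀ (n : ℕ) (K : SpKd), (K.weaken n).shape = K.shape
  | 0, K => rfl
  | n+1, K => by
      simp only [SpKd.weaken, Function.iterate_succ_apply]
      exact (weaken_shape n (K.shift 0)).trans (shape_shift K 0)

theorem shift0_weaken (n : ℕ) (K : SpKd) : (K.weaken n).shift 0 = K.weaken (n+1) :=
  (Function.iterate_succ_apply' _ _ _).symm

theorem append_nil : ∀ (s : SpSpine), s.append .nil = s
  | .nil => rfl
  | .cons a s => by simp [SpSpine.append, append_nil s]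

theorem append_assoc : ∀ (s t r : SpSpine), (s.append t).append r = s.append (t.append r)
  | .nil, _, _ => rfl
  | .cons a s, t, r => by simp [SpSpine.append, append_assoc s]

theorem shift_append : ∀ (s t : SpSpine) c, (s.append t).shift c = (s.shift c).append (t.shift c)
  | .nil, _, _ => rfl
  | .cons a s, t, c => by simp [SpSpine.append, SpSpine.shift, shift_append s]

theorem hsubst_append : ∀ (s t : SpSpine) x k v,
    (s.append t).hsubst x k v = (s.hsubst x k v).append (t.hsubst x k v)
  | .nil, _, _, _, _ => by simp [SpSpine.append, SpSpine.hsubst]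
  | .cons a s, t, x, k, v => by simp [SpSpine.append, SpSpine.hsubst, hsubst_append s]

mutual
theorem ty_hsubst_shift_cancel : ∀ (a : SpTy) c k v, (a.shift c).hsubst c k v = a
  | .elim (.var y) s, c, k, v => by
      rcases Nat.lt_or_ge y c with h | h
      · simp [SpTy.shift, SpHead.shift, h, SpTy.hsubst, show ¬ (y = c) by omega,
          show ¬ c < y by omega, sp_hsubst_shift_cancel s c k v]
      · simp [SpTy.shift, SpHead.shift, show ¬ y < c by omega, SpTy.hsubst,
          show ¬ (y + 1 = c) by omega, show c < y + 1 by omega,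
          sp_hsubst_shift_cancel s c k v]
  | .elim .top s, c, k, v => by
      simp [SpTy.shift, SpHead.shift, SpTy.hsubst, sp_hsubst_shift_cancel s c k v]
  | .elim .bot s, c, k, v => by
      simp [SpTy.shift, SpHead.shift, SpTy.hsubst, sp_hsubst_shift_cancel s c k v]
  | .elim (.arr a b) s, c, k, v => by
      simp [SpTy.shift, SpHead.shift, SpTy.hsubst, sp_hsubst_shift_cancel s c k v,
        ty_hsubst_shift_cancel a c k v, ty_hsubst_shift_cancel b c k v]
  | .elim (.all j a) s, c, k, v => by
      simp [SpTy.shift, SpHead.shift, SpTy.hsubst, sp_hsubst_shift_cancel s c k v,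
        kd_hsubst_shift_cancel j c k v, ty_hsubst_shift_cancel a (c+1) k (v.shift 0)]
  | .elim (.lam j a) s, c, k, v => by
      simp [SpTy.shift, SpHead.shift, SpTy.hsubst, sp_hsubst_shift_cancel s c k v,
        kd_hsubst_shift_cancel j c k v, ty_hsubst_shift_cancel a (c+1) k (v.shift 0)]

theorem sp_hsubst_shift_cancel : ∀ (s : SpSpine) c k v, (s.shift c).hsubst c k v = s
  | .nil, _, _, _ => by simp [SpSpine.shift, SpSpine.hsubst]
  | .cons a s, c, k, v => by
      simp [SpSpine.shift, SpSpine.hsubst, ty_hsubst_shift_cancel a c k v,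
        sp_hsubst_shift_cancel s c k v]

theorem kd_hsubst_shift_cancel : ∀ (K : SpKd) c k v, (K.shift c).hsubst c k v = K
  | .intv a b, c, k, v => by
      simp [SpKd.shift, SpKd.hsubst, ty_hsubst_shift_cancel a c k v,
        ty_hsubst_shift_cancel b c k v]
  | .pi j K', c, k, v => by
      simp [SpKd.shift, SpKd.hsubst, kd_hsubst_shift_cancel j c k v,
        kd_hsubst_shift_cancel K' (c+1) k (v.shift 0)]
end

mutual
theorem ty_shift_shift : ∀ (a : SpTy) c d, c ≤ d → (a.shift d).shift c = (a.shift c).shift (d+1)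
  | .elim h s, c, d, hcd => by
      simp [SpTy.shift, hd_shift_shift h c d hcd, sp_shift_shift s c d hcd]

theorem hd_shift_shift : ∀ (h : SpHead) c d, c ≤ d → (h.shift d).shift c = (h.shift c).shift (d+1)
  | .var y, c, d, hcd => by
      rcases Nat.lt_or_ge y c with h2 | h2
      · have h1 : y < d := by omega
        simp [SpHead.shift, h1, h2, show y < d + 1 by omega]
      · rcases Nat.lt_or_ge y d with h1 | h1
        · simp [SpHead.shift, h1, show ¬ y < c by omega, show y + 1 < d + 1 by omega,
            show ¬ y + 1 < c + 1 by omega]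
        · simp [SpHead.shift, show ¬ y < d by omega, show ¬ y < c by omega,
            show ¬ y + 1 < c by omega, show ¬ y + 1 < d + 1 by omega,
            show ¬ y + 1 < c + 1 by omega]
  | .top, _, _, _ => rfl
  | .bot, _, _, _ => rfl
  | .arr a b, c, d, hcd => by
      simp [SpHead.shift, ty_shift_shift a c d hcd, ty_shift_shift b c d hcd]
  | .all k a, c, d, hcd => by
      simp [SpHead.shift, kd_shift_shift k c d hcd, ty_shift_shift a (c+1) (d+1) (by omega)]
  | .lam k a, c, d, hcd => by
      simp [SpHead.shift, kd_shift_shift k c d hcd, ty_shift_shift a (c+1) (d+1) (by omega)]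

theorem sp_shift_shift : ∀ (s : SpSpine) c d, c ≤ d → (s.shift d).shift c = (s.shift c).shift (d+1)
  | .nil, _, _, _ => rfl
  | .cons a s, c, d, hcd => by
      simp [SpSpine.shift, ty_shift_shift a c d hcd, sp_shift_shift s c d hcd]

theorem kd_shift_shift : ∀ (K : SpKd) c d, c ≤ d → (K.shift d).shift c = (K.shift c).shift (d+1)
  | .intv a b, c, d, hcd => by
      simp [SpKd.shift, ty_shift_shift a c d hcd, ty_shift_shift b c d hcd]
  | .pi j k, c, d, hcd => by
      simp [SpKd.shift, kd_shift_shift j c d hcd, kd_shift_shift k (c+1) (d+1) (by omega)]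
end
/-! ### Auxiliary: weak equality basics -/

mutual
theorem weqTy_refl : ∀ (a : SpTy), WEqTy a a
  | .elim h s => .elim (weqHead_refl h) (weqSp_refl s)

theorem weqHead_refl : ∀ (h : SpHead), WEqHead h h
  | .var _ => .var
  | .top => .top
  | .bot => .bot
  | .arr a b => .arr (weqTy_refl a) (weqTy_refl b)
  | .all k a => .all (weqKd_refl k) (weqTy_refl a)
  | .lam k a => .lam rfl (weqTy_refl a)

theorem weqSp_refl : ∀ (s : SpSpine), WEqSp s s
  | .nil => .nil
  | .cons a s => .cons (weqTy_refl a) (weqSp_refl s)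

theorem weqKd_refl : ∀ (k : SpKd), WEqKd k k
  | .intv a b => .intv (weqTy_refl a) (weqTy_refl b)
  | .pi j k => .pi (weqKd_refl j) (weqKd_refl k)
end

mutual
theorem weqTy_symm : ∀ {a b : SpTy}, WEqTy a b → WEqTy b a
  | .elim h s, .elim h' s', .elim hh hs => .elim (weqHead_symm hh) (weqSp_symm hs)

theorem weqHead_symm : ∀ {h h' : SpHead}, WEqHead h h' → WEqHead h' h
  | _, _, .var => .var
  | _, _, .top => .top
  | _, _, .bot => .bot
  | _, _, .arr ha hb => .arr (weqTy_symm ha) (weqTy_symm hb)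
  | _, _, .all hk ha => .all (weqKd_symm hk) (weqTy_symm ha)
  | _, _, .lam hk ha => .lam hk.symm (weqTy_symm ha)

theorem weqSp_symm : ∀ {s s' : SpSpine}, WEqSp s s' → WEqSp s' s
  | _, _, .nil => .nil
  | _, _, .cons ha hs => .cons (weqTy_symm ha) (weqSp_symm hs)

theorem weqKd_symm : ∀ {k k' : SpKd}, WEqKd k k' → WEqKd k' k
  | _, _, .intv ha hb => .intv (weqTy_symm ha) (weqTy_symm hb)
  | _, _, .pi hj hk => .pi (weqKd_symm hj) (weqKd_symm hk)
end

mutual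
theorem weqTy_trans : ∀ {a b c : SpTy}, WEqTy a b → WEqTy b c → WEqTy a c
  | _, _, _, .elim hh hs, .elim hh' hs' =>
      .elim (weqHead_trans hh hh') (weqSp_trans hs hs')

theorem weqHead_trans : ∀ {h₁ h₂ h₃ : SpHead}, WEqHead h₁ h₂ → WEqHead h₂ h₃ → WEqHead h₁ h₃
  | _, _, _, .var, .var => .var
  | _, _, _, .top, .top => .top
  | _, _, _, .bot, .bot => .bot
  | _, _, _, .arr ha hb, .arr ha' hb' => .arr (weqTy_trans ha ha') (weqTy_trans hb hb')
  | _, _, _, .all hk ha, .all hk' ha' => .all (weqKd_trans hk hk') (weqTy_trans ha ha')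
  | _, _, _, .lam hk ha, .lam hk' ha' => .lam (hk.trans hk') (weqTy_trans ha ha')

theorem weqSp_trans : ∀ {s₁ s₂ s₃ : SpSpine}, WEqSp s₁ s₂ → WEqSp s₂ s₃ → WEqSp s₁ s₃
  | _, _, _, .nil, .nil => .nil
  | _, _, _, .cons ha hs, .cons ha' hs' => .cons (weqTy_trans ha ha') (weqSp_trans hs hs')

theorem weqKd_trans : ∀ {k₁ k₂ k₃ : SpKd}, WEqKd k₁ k₂ → WEqKd k₂ k₃ → WEqKd k₁ k₃
  | _, _, _, .intv ha hb, .intv ha' hb' => .intv (weqTy_trans ha ha') (weqTy_trans hb hb')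
  | _, _, _, .pi hj hk, .pi hj' hk' => .pi (weqKd_trans hj hj') (weqKd_trans hk hk')
end

mutual
theorem weqTy_shift : ∀ {a b : SpTy} (c : ℕ), WEqTy a b → WEqTy (a.shift c) (b.shift c)
  | _, _, c, .elim hh hs => by
      simp only [SpTy.shift]
      exact .elim (weqHead_shift c hh) (weqSp_shift c hs)

theorem weqHead_shift : ∀ {h h' : SpHead} (c : ℕ), WEqHead h h' → WEqHead (h.shift c) (h'.shift c)
  | _, _, c, .var => by
      simp only [SpHead.shift]; split <;> exact .var
  | _, _, c, .top => .top
  | _, _, c, .bot => .bot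
  | _, _, c, .arr ha hb => .arr (weqTy_shift c ha) (weqTy_shift c hb)
  | _, _, c, .all hk ha => .all (weqKd_shift c hk) (weqTy_shift (c+1) ha)
  | _, _, c, .lam hk ha => by
      simp only [SpHead.shift]
      exact .lam (((shape_shift _ c).trans hk).trans (shape_shift _ c).symm) (weqTy_shift (c+1) ha)

theorem weqSp_shift : ∀ {s s' : SpSpine} (c : ℕ), WEqSp s s' → WEqSp (s.shift c) (s'.shift c)
  | _, _, c, .nil => .nil
  | _, _, c, .cons ha hs => .cons (weqTy_shift c ha) (weqSp_shift c hs)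

theorem weqKd_shift : ∀ {k k' : SpKd} (c : ℕ), WEqKd k k' → WEqKd (k.shift c) (k'.shift c)
  | _, _, c, .intv ha hb => .intv (weqTy_shift c ha) (weqTy_shift c hb)
  | _, _, c, .pi hj hk => .pi (weqKd_shift c hj) (weqKd_shift (c+1) hk)
end

theorem weqSp_append : ∀ {s s' t t' : SpSpine}, WEqSp s s' → WEqSp t t' →
    WEqSp (s.append t) (s'.append t')
  | _, _, _, _, .nil, ht => ht
  | _, _, _, _, .cons ha hs, ht => .cons ha (weqSp_append hs ht)
/-! ### Auxiliary: shift commutes with hereditary substitution and reducing application -/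

theorem shift_var (c y : ℕ) : SpHead.shift c (.var y) = .var (if y < c then y else y + 1) := by
  by_cases h : y < c <;> simp [SpHead.shift, h]

theorem appSp_shift : ∀ (d : SpTy) (s : SpSpine) (c : ℕ),
    (d.appSp s).shift c = (d.shift c).appSp (s.shift c)
  | .elim h t, s, c => by simp [SpTy.appSp, SpTy.shift, shift_append]

theorem app1_shift (d v : SpTy) (c : ℕ) :
    (d.app1 v).shift c = (d.shift c).app1 (v.shift c) := by
  simp [SpTy.app1, appSp_shift, SpSpine.shift]

mutual
theorem rapp_shift : ∀ (d : SpTy) (k : SKind) (v : SpTy) (c : ℕ),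
    (d.rapp k v).shift c = (d.shift c).rapp k (v.shift c)
  | d, .star, v, c => by
      cases d; simp [SpTy.rapp, app1_shift, SpTy.shift]
  | .elim (.lam j d') .nil, .arr k1 k2, v, c => by
      simp only [SpTy.rapp, SpTy.shift, SpHead.shift, SpSpine.shift]
      exact (ty_shift_hsubst_lo d' 0 c k1 v (Nat.zero_le c)).symm
  | .elim (.var y) s, .arr k1 k2, v, c => by
      simp [SpTy.rapp, app1_shift, SpTy.shift, shift_var]
  | .elim .top s, .arr k1 k2, v, c => by
      simp [SpTy.rapp, app1_shift, SpTy.shift, SpHead.shift]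
  | .elim .bot s, .arr k1 k2, v, c => by
      simp [SpTy.rapp, app1_shift, SpTy.shift, SpHead.shift]
  | .elim (.arr a b) s, .arr k1 k2, v, c => by
      simp [SpTy.rapp, app1_shift, SpTy.shift, SpHead.shift]
  | .elim (.all j a) s, .arr k1 k2, v, c => by
      simp [SpTy.rapp, app1_shift, SpTy.shift, SpHead.shift]
  | .elim (.lam j a) (.cons b s), .arr k1 k2, v, c => by
      simp [SpTy.rapp, app1_shift, SpTy.shift, SpHead.shift, SpSpine.shift]
termination_by d k v c => (sizeOf k, 0, 0)

theorem rappSp_shift : ∀ (d : SpTy) (k : SKind) (s : SpSpine) (c : ℕ),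
    (SpTy.rappSp d k s).shift c = SpTy.rappSp (d.shift c) k (s.shift c)
  | d, k, .nil, c => by simp [SpTy.rappSp, SpSpine.shift]
  | d, .arr k1 k2, .cons e es, c => by
      simp only [SpTy.rappSp, SpSpine.shift]
      rw [rappSp_shift _ k2 es c, rapp_shift d (.arr k1 k2) e c]
  | d, .star, .cons e es, c => by
      simp [SpTy.rappSp, SpSpine.shift, appSp_shift]
termination_by d k s c => (sizeOf k, 0, sizeOf s + 1)

/-- shift below the substituted variable: `x ≤ c`. -/
theorem ty_shift_hsubst_lo : ∀ (a : SpTy) (x c : ℕ) (k : SKind) (v : SpTy), x ≤ c →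
    (a.shift (c+1)).hsubst x k (v.shift c) = (a.hsubst x k v).shift c
  | .elim (.var y) s, x, c, k, v, hxc => by
      rcases eq_or_ne y x with rfl | hne
      · simp only [SpTy.shift, shift_var, if_pos (show y < c + 1 by omega),
          SpTy.hsubst, if_pos rfl, ite_true, sp_shift_hsubst_lo s y c k v hxc]
        exact (rappSp_shift v k (s.hsubst y k v) c).symm
      · rcases Nat.lt_or_ge y (c+1) with h1 | h1
        · have hz : (if x < y then y - 1 else y) < c := by split <;> omega
          simp only [SpTy.shift, shift_var, if_pos h1, SpTy.hsubst, if_neg hne,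
            sp_shift_hsubst_lo s x c k v hxc, if_pos hz]
        · simp only [SpTy.shift, shift_var, if_neg (show ¬ y < c + 1 by omega),
            SpTy.hsubst, if_neg (show ¬ y + 1 = x by omega),
            if_pos (show x < y + 1 by omega), if_pos (show x < y by omega),
            if_neg hne, sp_shift_hsubst_lo s x c k v hxc,
            if_neg (show ¬ y - 1 < c by omega)]
          congr 2
          omega
  | .elim .top s, x, c, k, v, hxc => by
      simp [SpTy.shift, SpHead.shift, SpTy.hsubst, sp_shift_hsubst_lo s x c k v hxc]
  | .elim .bot s, x, c, k, v, hxc => by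
      simp [SpTy.shift, SpHead.shift, SpTy.hsubst, sp_shift_hsubst_lo s x c k v hxc]
  | .elim (.arr a b) s, x, c, k, v, hxc => by
      simp [SpTy.shift, SpHead.shift, SpTy.hsubst, sp_shift_hsubst_lo s x c k v hxc,
        ty_shift_hsubst_lo a x c k v hxc, ty_shift_hsubst_lo b x c k v hxc]
  | .elim (.all j a) s, x, c, k, v, hxc => by
      simp only [SpTy.shift, SpHead.shift, SpTy.hsubst, sp_shift_hsubst_lo s x c k v hxc,
        kd_shift_hsubst_lo j x c k v hxc]
      rw [ty_shift_shift v 0 c (Nat.zero_le c),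
        ty_shift_hsubst_lo a (x+1) (c+1) k (v.shift 0) (by omega)]
  | .elim (.lam j a) s, x, c, k, v, hxc => by
      simp only [SpTy.shift, SpHead.shift, SpTy.hsubst, sp_shift_hsubst_lo s x c k v hxc,
        kd_shift_hsubst_lo j x c k v hxc]
      rw [ty_shift_shift v 0 c (Nat.zero_le c),
        ty_shift_hsubst_lo a (x+1) (c+1) k (v.shift 0) (by omega)]
termination_by a x c k v _ => (sizeOf k, 1, sizeOf a)

theorem sp_shift_hsubst_lo : ∀ (s : SpSpine) (x c : ℕ) (k : SKind) (v : SpTy), x ≤ c →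
    (s.shift (c+1)).hsubst x k (v.shift c) = (s.hsubst x k v).shift c
  | .nil, _, _, _, _, _ => by simp [SpSpine.shift, SpSpine.hsubst]
  | .cons a s, x, c, k, v, hxc => by
      simp [SpSpine.shift, SpSpine.hsubst, ty_shift_hsubst_lo a x c k v hxc,
        sp_shift_hsubst_lo s x c k v hxc]
termination_by s x c k v _ => (sizeOf k, 1, sizeOf s)

theorem kd_shift_hsubst_lo : ∀ (K : SpKd) (x c : ℕ) (k : SKind) (v : SpTy), x ≤ c →
    (K.shift (c+1)).hsubst x k (v.shift c) = (K.hsubst x k v).shift c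
  | .intv a b, x, c, k, v, hxc => by
      simp [SpKd.shift, SpKd.hsubst, ty_shift_hsubst_lo a x c k v hxc,
        ty_shift_hsubst_lo b x c k v hxc]
  | .pi j K', x, c, k, v, hxc => by
      simp only [SpKd.shift, SpKd.hsubst, kd_shift_hsubst_lo j x c k v hxc]
      rw [ty_shift_shift v 0 c (Nat.zero_le c),
        kd_shift_hsubst_lo K' (x+1) (c+1) k (v.shift 0) (by omega)]
termination_by K x c k v _ => (sizeOf k, 1, sizeOf K)

/-- shift above the substituted variable: `c ≤ x`. -/
theorem ty_shift_hsubst_hi : ∀ (a : SpTy) (x c : ℕ) (k : SKind) (v : SpTy), c ≤ x →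
    (a.shift c).hsubst (x+1) k (v.shift c) = (a.hsubst x k v).shift c
  | .elim (.var y) s, x, c, k, v, hcx => by
      rcases eq_or_ne y x with rfl | hne
      · simp only [SpTy.shift, shift_var, if_neg (show ¬ y < c by omega),
          SpTy.hsubst, if_pos rfl, ite_true, sp_shift_hsubst_hi s y c k v hcx]
        exact (rappSp_shift v k (s.hsubst y k v) c).symm
      · rcases Nat.lt_or_ge y c with h1 | h1
        · simp only [SpTy.shift, shift_var, if_pos h1, SpTy.hsubst,
            if_neg (show ¬ y = x + 1 by omega), if_neg (show ¬ x + 1 < y by omega),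
            if_neg hne, if_neg (show ¬ x < y by omega),
            sp_shift_hsubst_hi s x c k v hcx, if_pos h1]
        · rcases Nat.lt_or_ge x y with h2 | h2
          · simp only [SpTy.shift, shift_var, if_neg (show ¬ y < c by omega), SpTy.hsubst,
              if_neg (show ¬ y + 1 = x + 1 by omega), if_pos (show x + 1 < y + 1 by omega),
              if_neg hne, if_pos h2, sp_shift_hsubst_hi s x c k v hcx,
              if_neg (show ¬ y - 1 < c by omega)]
            congr 2
            omega
          · simp only [SpTy.shift, shift_var, if_neg (show ¬ y < c by omega), SpTy.hsubst,
              if_neg (show ¬ y + 1 = x + 1 by omega), if_neg (show ¬ x + 1 < y + 1 by omega),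
              if_neg hne, if_neg (show ¬ x < y by omega),
              sp_shift_hsubst_hi s x c k v hcx, if_neg (show ¬ y < c by omega)]
  | .elim .top s, x, c, k, v, hcx => by
      simp [SpTy.shift, SpHead.shift, SpTy.hsubst, sp_shift_hsubst_hi s x c k v hcx]
  | .elim .bot s, x, c, k, v, hcx => by
      simp [SpTy.shift, SpHead.shift, SpTy.hsubst, sp_shift_hsubst_hi s x c k v hcx]
  | .elim (.arr a b) s, x, c, k, v, hcx => by
      simp [SpTy.shift, SpHead.shift, SpTy.hsubst, sp_shift_hsubst_hi s x c k v hcx,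
        ty_shift_hsubst_hi a x c k v hcx, ty_shift_hsubst_hi b x c k v hcx]
  | .elim (.all j a) s, x, c, k, v, hcx => by
      simp only [SpTy.shift, SpHead.shift, SpTy.hsubst, sp_shift_hsubst_hi s x c k v hcx,
        kd_shift_hsubst_hi j x c k v hcx]
      rw [ty_shift_shift v 0 c (Nat.zero_le c),
        ty_shift_hsubst_hi a (x+1) (c+1) k (v.shift 0) (by omega)]
  | .elim (.lam j a) s, x, c, k, v, hcx => by
      simp only [SpTy.shift, SpHead.shift, SpTy.hsubst, sp_shift_hsubst_hi s x c k v hcx,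
        kd_shift_hsubst_hi j x c k v hcx]
      rw [ty_shift_shift v 0 c (Nat.zero_le c),
        ty_shift_hsubst_hi a (x+1) (c+1) k (v.shift 0) (by omega)]
termination_by a x c k v _ => (sizeOf k, 2, sizeOf a)

theorem sp_shift_hsubst_hi : ∀ (s : SpSpine) (x c : ℕ) (k : SKind) (v : SpTy), c ≤ x →
    (s.shift c).hsubst (x+1) k (v.shift c) = (s.hsubst x k v).shift c
  | .nil, _, _, _, _, _ => by simp [SpSpine.shift, SpSpine.hsubst]
  | .cons a s, x, c, k, v, hcx => by
      simp [SpSpine.shift, SpSpine.hsubst, ty_shift_hsubst_hi a x c k v hcx,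
        sp_shift_hsubst_hi s x c k v hcx]
termination_by s x c k v _ => (sizeOf k, 2, sizeOf s)

theorem kd_shift_hsubst_hi : ∀ (K : SpKd) (x c : ℕ) (k : SKind) (v : SpTy), c ≤ x →
    (K.shift c).hsubst (x+1) k (v.shift c) = (K.hsubst x k v).shift c
  | .intv a b, x, c, k, v, hcx => by
      simp [SpKd.shift, SpKd.hsubst, ty_shift_hsubst_hi a x c k v hcx,
        ty_shift_hsubst_hi b x c k v hcx]
  | .pi j K', x, c, k, v, hcx => by
      simp only [SpKd.shift, SpKd.hsubst, kd_shift_hsubst_hi j x c k v hcx]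
      rw [ty_shift_shift v 0 c (Nat.zero_le c),
        kd_shift_hsubst_hi K' (x+1) (c+1) k (v.shift 0) (by omega)]
termination_by K x c k v _ => (sizeOf k, 2, sizeOf K)
end
/-! ### Auxiliary: weak equality congruence for hsubst and reducing application -/

theorem weqTy_appSp : ∀ {d d' : SpTy} {t t' : SpSpine}, WEqTy d d' → WEqSp t t' →
    WEqTy (d.appSp t) (d'.appSp t')
  | _, _, _, _, .elim hh hs, ht => .elim hh (weqSp_append hs ht)

theorem weqTy_app1 {d d' v v' : SpTy} (h : WEqTy d d') (hv : WEqTy v v') :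
    WEqTy (d.app1 v) (d'.app1 v') :=
  weqTy_appSp h (.cons hv .nil)

mutual
theorem weq_rapp : ∀ (k : SKind) (d d' v v' : SpTy), WEqTy d d' → WEqTy v v' →
    WEqTy (d.rapp k v) (d'.rapp k v')
  | .star, d, d', v, v', hd, hv => by
      cases d; cases d'
      simp only [SpTy.rapp]
      exact weqTy_app1 hd hv
  | .arr k1 k2, _, _, v, v', .elim hh hs, hv => by
      cases hh with
      | var =>
          cases hs <;> simp only [SpTy.rapp] <;>
            exact weqTy_app1 (.elim .var (by constructor <;> assumption)) hv
      | top =>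
          cases hs <;> simp only [SpTy.rapp] <;>
            exact weqTy_app1 (.elim .top (by constructor <;> assumption)) hv
      | bot =>
          cases hs <;> simp only [SpTy.rapp] <;>
            exact weqTy_app1 (.elim .bot (by constructor <;> assumption)) hv
      | arr ha hb =>
          cases hs <;> simp only [SpTy.rapp] <;>
            exact weqTy_app1 (.elim (.arr ha hb) (by constructor <;> assumption)) hv
      | all hk ha =>
          cases hs <;> simp only [SpTy.rapp] <;>
            exact weqTy_app1 (.elim (.all hk ha) (by constructor <;> assumption)) hv
      | lam hk ha =>
          cases hs with
          | nil =>
              simp only [SpTy.rapp]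
              exact weq_hsubstTy _ _ 0 k1 _ _ ha hv
          | cons hb hs' =>
              simp only [SpTy.rapp]
              exact weqTy_app1 (.elim (.lam hk ha) (.cons hb hs')) hv
termination_by k d _ _ _ _ _ => (sizeOf k, 0, 0)

theorem weq_rappSp : ∀ (k : SKind) (d d' : SpTy) (s s' : SpSpine), WEqTy d d' → WEqSp s s' →
    WEqTy (SpTy.rappSp d k s) (SpTy.rappSp d' k s')
  | k, d, d', _, _, hd, .nil => by
      simp only [SpTy.rappSp]; exact hd
  | .star, d, d', _, _, hd, .cons ha hs => by
      simp only [SpTy.rappSp]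
      exact weqTy_appSp hd (.cons ha hs)
  | .arr k1 k2, d, d', _, _, hd, .cons ha hs => by
      simp only [SpTy.rappSp]
      exact weq_rappSp k2 _ _ _ _ (weq_rapp (.arr k1 k2) _ _ _ _ hd ha) hs
termination_by k d _ s _ _ _ => (sizeOf k, 0, sizeOf s + 1)

theorem weq_hsubstTy : ∀ (a a' : SpTy) (x : ℕ) (k : SKind) (v v' : SpTy),
    WEqTy a a' → WEqTy v v' → WEqTy (a.hsubst x k v) (a'.hsubst x k v')
  | _, _, x, k, v, v', .elim (h₁ := h₁) hh hs, hv => by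
      cases hh with
      | var =>
          rename_i y
          by_cases hyx : y = x
          · subst hyx
            simp only [SpTy.hsubst, if_pos rfl]
            exact weq_rappSp k _ _ _ _ hv (weq_hsubstSp _ _ y k _ _ hs hv)
          · simp only [SpTy.hsubst, if_neg hyx]
            exact .elim .var (weq_hsubstSp _ _ x k _ _ hs hv)
      | top => simp only [SpTy.hsubst]; exact .elim .top (weq_hsubstSp _ _ x k _ _ hs hv)
      | bot => simp only [SpTy.hsubst]; exact .elim .bot (weq_hsubstSp _ _ x k _ _ hs hv)
      | arr ha hb =>
          simp only [SpTy.hsubst]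
          exact .elim (.arr (weq_hsubstTy _ _ x k _ _ ha hv) (weq_hsubstTy _ _ x k _ _ hb hv))
            (weq_hsubstSp _ _ x k _ _ hs hv)
      | all hk ha =>
          simp only [SpTy.hsubst]
          exact .elim (.all (weq_hsubstKd _ _ x k _ _ hk hv)
              (weq_hsubstTy _ _ (x+1) k _ _ ha (weqTy_shift 0 hv)))
            (weq_hsubstSp _ _ x k _ _ hs hv)
      | lam hk ha =>
          simp only [SpTy.hsubst]
          exact .elim (.lam (((shape_hsubst _ x k _).trans hk).trans (shape_hsubst _ x k _).symm)
              (weq_hsubstTy _ _ (x+1) k _ _ ha (weqTy_shift 0 hv)))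
            (weq_hsubstSp _ _ x k _ _ hs hv)
termination_by a _ x k _ _ _ _ => (sizeOf k, 1, sizeOf a)

theorem weq_hsubstSp : ∀ (s s' : SpSpine) (x : ℕ) (k : SKind) (v v' : SpTy),
    WEqSp s s' → WEqTy v v' → WEqSp (s.hsubst x k v) (s'.hsubst x k v')
  | _, _, x, k, v, v', .nil, hv => by simp only [SpSpine.hsubst]; exact .nil
  | _, _, x, k, v, v', .cons ha hs, hv => by
      simp only [SpSpine.hsubst]
      exact .cons (weq_hsubstTy _ _ x k _ _ ha hv) (weq_hsubstSp _ _ x k _ _ hs hv)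
termination_by s _ x k _ _ _ _ => (sizeOf k, 1, sizeOf s)

theorem weq_hsubstKd : ∀ (K K' : SpKd) (x : ℕ) (k : SKind) (v v' : SpTy),
    WEqKd K K' → WEqTy v v' → WEqKd (K.hsubst x k v) (K'.hsubst x k v')
  | _, _, x, k, v, v', .intv ha hb, hv => by
      simp only [SpKd.hsubst]
      exact .intv (weq_hsubstTy _ _ x k _ _ ha hv) (weq_hsubstTy _ _ x k _ _ hb hv)
  | _, _, x, k, v, v', .pi hj hk, hv => by
      simp only [SpKd.hsubst]
      exact .pi (weq_hsubstKd _ _ x k _ _ hj hv)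
        (weq_hsubstKd _ _ (x+1) k _ _ hk (weqTy_shift 0 hv))
termination_by K _ x k _ _ _ _ => (sizeOf k, 1, sizeOf K)
end
/-! ### Auxiliary: η-expansion lemmas -/

theorem weq_etaExp : ∀ (J J' : SpKd) (a a' : SpTy), J.shape = J'.shape → WEqTy a a' →
    WEqTy (etaExp J a) (etaExp J' a')
  | .intv _ _, .intv _ _, _, _, _, ha => ha
  | .pi J1 K1, .pi J2 K2, a, a', hsh, ha => by
      simp only [SpKd.shape, SKind.arr.injEq] at hsh
      simp only [etaExp]
      exact .elim (.lam hsh.1 (weq_etaExp K1 K2 _ _ hsh.2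
        (weqTy_app1 (weqTy_shift 0 ha) (weq_etaExp J1 J2 _ _ hsh.1 (weqTy_refl _))))) .nil
  | .intv _ _, .pi _ _, _, _, h, _ => by simp [SpKd.shape] at h
  | .pi _ _, .intv _ _, _, _, h, _ => by simp [SpKd.shape] at h

theorem etaExp_shift : ∀ (K : SpKd) (a : SpTy) (c : ℕ),
    WEqTy ((etaExp K a).shift c) (etaExp (K.shift c) (a.shift c))
  | .intv _ _, a, c => by simp only [etaExp, SpKd.shift]; exact weqTy_refl _
  | .pi J K', a, c => by
      simp only [etaExp, SpKd.shift, SpTy.shift, SpHead.shift, SpSpine.shift]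
      refine .elim (.lam rfl ?_) .nil
      refine weqTy_trans (etaExp_shift K' _ (c+1)) ?_
      refine weq_etaExp _ _ _ _ rfl ?_
      rw [app1_shift, ← ty_shift_shift a 0 c (Nat.zero_le c)]
      refine weqTy_app1 (weqTy_refl _) ?_
      refine weqTy_trans (etaExp_shift J _ (c+1)) ?_
      refine weq_etaExp _ _ _ _ ((shape_shift J (c+1)).trans (shape_shift J c).symm) ?_
      simp only [SpTy.shift, shift_var, if_pos (Nat.zero_lt_succ c), SpSpine.shift]
      exact weqTy_refl _

/-- Shape-only spine compatibility. -/
inductive SpSh : SKind → SpSpine → SKind → Prop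
  | nil : SpSh k .nil k
  | cons : SpSh k s l → SpSh (.arr j k) (.cons a s) l

theorem SpSh.shiftSp : ∀ {j l : SKind} {s : SpSpine}, SpSh j s l → ∀ c, SpSh j (s.shift c) l
  | _, _, _, .nil, _ => .nil
  | _, _, _, .cons h, c => .cons (h.shiftSp c)

theorem SpSh.appendSp : ∀ {j l m : SKind} {s t : SpSpine}, SpSh j s l → SpSh l t m →
    SpSh j (s.append t) m
  | _, _, _, _, _, .nil, ht => ht
  | _, _, _, _, _, .cons h, ht => .cons (h.appendSp ht)

theorem SSp.toSpSh : ∀ {γ j s l}, SSp γ j s l → SpSh j s l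
  | _, _, _, _, .nil => .nil
  | _, _, _, _, .cons _ h => .cons h.toSpSh

theorem rappSp_append : ∀ {j s l}, SpSh j s l → ∀ (d : SpTy) (t : SpSpine),
    SpTy.rappSp d j (s.append t) = SpTy.rappSp (SpTy.rappSp d j s) l t
  | j, _, _, .nil, d, t => by simp [SpSpine.append, SpTy.rappSp]
  | _, _, l, .cons h, d, t => by
      simp only [SpSpine.append, SpTy.rappSp]
      exact rappSp_append h _ t

/-- Non-hit hereditary substitution distributes (weakly) over η-expansion of a neutral. -/
theorem etaExp_hsubst_ne : ∀ (K : SpKd) (x y : ℕ) (u : SpSpine) (k : SKind) (v : SpTy), y ≠ x →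
    WEqTy ((etaExp K (.elim (.var y) u)).hsubst x k v)
      (etaExp (K.hsubst x k v) (.elim (.var (if x < y then y - 1 else y)) (u.hsubst x k v)))
  | .intv a b, x, y, u, k, v, hne => by
      simp only [etaExp, SpTy.hsubst, if_neg hne, SpKd.hsubst]
      exact weqTy_refl _
  | .pi J K', x, y, u, k, v, hne => by
      have harith : (if x + 1 < y + 1 then y + 1 - 1 else y + 1)
          = (if x < y then y - 1 else y) + 1 := by split_ifs <;> omega
      simp only [etaExp, SpTy.shift, shift_var, if_neg (show ¬ y < 0 by omega),
        SpTy.app1, SpTy.appSp, SpTy.hsubst, SpKd.hsubst]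
      refine .elim (.lam rfl ?_) ?_
      · refine weqTy_trans (etaExp_hsubst_ne K' (x+1) (y+1) _ k (v.shift 0) (by omega)) ?_
        rw [harith]
        refine weq_etaExp _ _ _ _ rfl (.elim .var ?_)
        rw [hsubst_append, sp_shift_hsubst_hi u x 0 k v (Nat.zero_le x)]
        refine weqSp_append (weqSp_refl _) ?_
        simp only [SpSpine.hsubst]
        refine .cons ?_ .nil
        refine weqTy_trans (etaExp_hsubst_ne J (x+1) 0 .nil k (v.shift 0) (by omega)) ?_
        refine weq_etaExp _ _ _ _ ((shape_hsubst J (x+1) k _).trans (shape_hsubst J x k v).symm)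
          (.elim ?_ ?_)
        · simp only [if_neg (show ¬ x + 1 < 0 by omega)]; exact .var
        · simp only [SpSpine.hsubst]; exact .nil
      · simp only [SpSpine.hsubst]; exact .nil
/-! ### The main development -/

/-- The statement of the main theorem, for a fixed kind. -/
def Vanish (K : SpKd) : Prop :=
  ∀ (γ δ : SCtx), SWfKd γ K →
    (∀ (V : SpTy) (j : SKind), SKTy (δ ++ some K.shape :: γ) V j →
      WEqTy ((V.shift (δ.length + 1)).hsubst δ.length K.shape
          (etaExp (K.weaken (δ.length + 1)) (.elim (.var δ.length) .nil))) V) ∧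
    (∀ (J : SpKd), SWfKd (δ ++ some K.shape :: γ) J →
      WEqKd ((J.shift (δ.length + 1)).hsubst δ.length K.shape
          (etaExp (K.weaken (δ.length + 1)) (.elim (.var δ.length) .nil))) J) ∧
    (∀ (s : SpSpine) (j l : SKind), SSp (δ ++ some K.shape :: γ) j s l →
      WEqSp ((s.shift (δ.length + 1)).hsubst δ.length K.shape
          (etaExp (K.weaken (δ.length + 1)) (.elim (.var δ.length) .nil))) s)

def Below (n : ℕ) : Prop := ∀ K : SpKd, sizeOf K.shape < n → Vanish K

theorem Below.mono {n m : ℕ} (h : Below n) (hmn : m ≤ n) : Below m :=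
  fun K hK => h K (lt_of_lt_of_le hK hmn)

/-- Inversion: normal types of arrow shape are operator abstractions. -/
theorem skty_arr_inv {Γ : SCtx} {U : SpTy} {ja kb : SKind} (hU : SKTy Γ U (.arr ja kb)) :
    ∃ J' V, U = .elim (.lam J' V) .nil ∧ J'.shape = ja ∧ SKTy (some ja :: Γ) V kb := by
  generalize hsh : SKind.arr ja kb = ksh at hU
  cases hU with
  | lam hJ hV =>
      injection hsh with h1 h2
      subst h1; subst h2
      exact ⟨_, _, rfl, rfl, hV⟩
  | top => exact SKind.noConfusion hsh
  | bot => exact SKind.noConfusion hsh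
  | arr _ _ => exact SKind.noConfusion hsh
  | all _ _ => exact SKind.noConfusion hsh
  | ne _ => exact SKind.noConfusion hsh

/-- Inversion of weak equality against an abstraction. -/
theorem weq_lam_inv {a : SpTy} {J : SpKd} {V : SpTy}
    (h : WEqTy a (.elim (.lam J V) .nil)) :
    ∃ Jx bx, a = .elim (.lam Jx bx) .nil ∧ Jx.shape = J.shape ∧ WEqTy bx V := by
  cases h with
  | elim hh hs =>
      cases hs
      cases hh with
      | lam h1 h2 => exact ⟨_, _, rfl, h1, h2⟩

/-- Substituting at a hit η-expanded neutral: the result is the (weak-equality class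
of the) reducing application of the substituted type to the substituted spine. -/
theorem lemH : ∀ (K₂ : SpKd), Below (sizeOf K₂.shape) →
    ∀ (x : ℕ) (k : SKind) (e : SpTy) (u w₀ : SpSpine) (U : SpTy) (Γ : SCtx),
      SpSh k w₀ K₂.shape → WEqSp (u.hsubst x k e) w₀ → WEqTy (SpTy.rappSp e k w₀) U →
      SKTy Γ U K₂.shape →
      WEqTy ((etaExp K₂ (.elim (.var x) u)).hsubst x k e) U
  | .intv a b, hb, x, k, e, u, w₀, U, Γ, hsp, hu, hr, hU => by
      simp only [etaExp, SpTy.hsubst, if_pos rfl, ite_true]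
      exact weqTy_trans (weq_rappSp k _ _ _ _ (weqTy_refl e) hu) hr
  | .pi Ja Kb, hb, x, k, e, u, w₀, U, Γ, hsp, hu, hr, hU => by
      simp only [show (SpKd.pi Ja Kb).shape = .arr Ja.shape Kb.shape from rfl] at hU hsp hb hr
      obtain ⟨J', V, rfl, hshJ, hV⟩ := skty_arr_inv hU
      obtain ⟨Jx, bx, hE, hshx, hbx⟩ := weq_lam_inv hr
      simp only [etaExp, SpTy.shift, shift_var, if_neg (show ¬ x < 0 by omega),
        SpTy.app1, SpTy.appSp, SpTy.hsubst, SpSpine.hsubst]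
      refine .elim (.lam ((shape_hsubst Ja x k e).trans hshJ.symm) ?_) .nil
      have harg : WEqTy ((etaExp Ja (.elim (.var 0) .nil)).hsubst (x+1) k (e.shift 0))
          (etaExp (Ja.hsubst (x+1) k (e.shift 0)) (.elim (.var 0) .nil)) := by
        refine weqTy_trans (etaExp_hsubst_ne Ja (x+1) 0 .nil k (e.shift 0) (by omega)) ?_
        refine weq_etaExp _ _ _ _ rfl (.elim ?_ ?_)
        · simp only [if_neg (show ¬ x + 1 < 0 by omega)]; exact .var
        · simp only [SpSpine.hsubst]; exact .nil
      refine lemH Kb (hb.mono (by simp only [SKind.arr.sizeOf_spec]; omega)) (x+1) k (e.shift 0)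
        ((u.shift 0).append (.cons (etaExp Ja (.elim (.var 0) .nil)) .nil))
        ((w₀.shift 0).append
          (.cons (etaExp (Ja.hsubst (x+1) k (e.shift 0)) (.elim (.var 0) .nil)) .nil))
        V (some Ja.shape :: Γ) ?_ ?_ ?_ hV
      · exact (hsp.shiftSp 0).appendSp (.cons .nil)
      · rw [hsubst_append, sp_shift_hsubst_hi u x 0 k e (Nat.zero_le x)]
        refine weqSp_append (weqSp_shift 0 hu) ?_
        simp only [SpSpine.hsubst]
        exact .cons harg .nil
      · -- `rappSp e⁺ k (w₀⁺ ++ [η(0)]) ≈ V`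
        rw [rappSp_append (hsp.shiftSp 0)]
        rw [← rappSp_shift e k w₀ 0, hE]
        simp only [SpTy.shift, SpHead.shift, SpSpine.shift, SpTy.rappSp, SpTy.rapp]
        have hcanon := ((hb (canonKd Ja.shape)
            (by rw [canonKd_shape]; simp only [SKind.arr.sizeOf_spec]; omega)) Γ []
            (canonKd_wf Γ Ja.shape)).1 V Kb.shape
            (by simpa [canonKd_shape] using hV)
        simp only [canonKd_shape, List.nil_append, List.length_nil] at hcanon
        refine weqTy_trans ?_ hcanon
        refine weq_hsubstTy _ _ 0 _ _ _ (weqTy_shift 1 hbx) ?_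
        refine weq_etaExp _ _ _ _ ?_ (weqTy_refl _)
        rw [shape_hsubst, weaken_shape, canonKd_shape]
termination_by K₂ _ _ _ _ _ _ _ _ _ _ _ _ => sizeOf K₂
/-- Hereditary substitution of an η-long normal into the η-expansion of the
substituted variable itself yields the normal, up to weak equality. -/
theorem lemG (J : SpKd) (hb : Below (sizeOf J.shape)) :
    ∀ (e U : SpTy) (Γ : SCtx), WEqTy e U → SKTy Γ U J.shape →
      WEqTy ((etaExp J (.elim (.var 0) .nil)).hsubst 0 J.shape e) U := by
  intro e U Γ he hU
  cases J with
  | intv a b =>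
      simp only [etaExp, SpTy.hsubst, if_pos rfl, ite_true, SpSpine.hsubst, SpTy.rappSp]
      exact he
  | pi J1 J2 =>
      simp only [show (SpKd.pi J1 J2).shape = .arr J1.shape J2.shape from rfl] at hU hb ⊢
      obtain ⟨J', V, rfl, hshJ, hV⟩ := skty_arr_inv hU
      obtain ⟨Je, be, rfl, hshe, hbe⟩ := weq_lam_inv he
      simp only [etaExp, SpTy.shift, shift_var, if_neg (show ¬ (0:ℕ) < 0 by omega),
        SpTy.app1, SpTy.appSp, SpTy.hsubst, SpSpine.hsubst, SpSpine.shift, SpSpine.append]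
      refine .elim (.lam ((shape_hsubst J1 0 _ _).trans hshJ.symm) ?_) .nil
      have harg : WEqTy
          ((etaExp J1 (.elim (.var 0) .nil)).hsubst 1 (.arr J1.shape J2.shape)
            ((SpTy.elim (.lam Je be) .nil).shift 0))
          (etaExp (J1.hsubst 1 (.arr J1.shape J2.shape)
            ((SpTy.elim (.lam Je be) .nil).shift 0)) (.elim (.var 0) .nil)) := by
        refine weqTy_trans (etaExp_hsubst_ne J1 1 0 .nil _ _ (by omega)) ?_
        refine weq_etaExp _ _ _ _ rfl (.elim ?_ ?_)
        · simp only [if_neg (show ¬ (1:ℕ) < 0 by omega)]; exact .var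
        · simp only [SpSpine.hsubst]; exact .nil
      refine lemH J2 (hb.mono (by simp only [SKind.arr.sizeOf_spec]; omega)) 1
        (.arr J1.shape J2.shape) ((SpTy.elim (.lam Je be) .nil).shift 0)
        (.cons (etaExp J1 (.elim (.var 0) .nil)) .nil)
        (.cons (etaExp (J1.hsubst 1 (.arr J1.shape J2.shape)
          ((SpTy.elim (.lam Je be) .nil).shift 0)) (.elim (.var 0) .nil)) .nil)
        V (some J1.shape :: Γ) (.cons .nil) ?_ ?_ (hshJ ▸ hV)
      · simp only [SpSpine.hsubst]
        exact .cons harg .nil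
      · simp only [SpTy.shift, SpHead.shift, SpSpine.shift, SpTy.rappSp, SpTy.rapp]
        have hcanon := ((hb (canonKd J1.shape)
            (by rw [canonKd_shape]; simp only [SKind.arr.sizeOf_spec]; omega)) Γ []
            (canonKd_wf Γ J1.shape)).1 V J2.shape
            (by simpa [canonKd_shape, hshJ] using hV)
        simp only [canonKd_shape, List.nil_append, List.length_nil] at hcanon
        refine weqTy_trans ?_ hcanon
        refine weq_hsubstTy _ _ 0 _ _ _ (weqTy_shift 1 hbe) ?_
        refine weq_etaExp _ _ _ _ ?_ (weqTy_refl _)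
        rw [shape_hsubst, weaken_shape, canonKd_shape]

/-- Reducing application of the η-expansion of a variable to a simply-kinded spine
is weakly equal to the plain application. -/
theorem lemC : ∀ (K : SpKd), Below (sizeOf K.shape) →
    ∀ (x : ℕ) (u u₀ s s₀ : SpSpine) (Γ : SCtx),
      SSp Γ K.shape s₀ .star → WEqSp s s₀ → WEqSp u u₀ →
      WEqTy (SpTy.rappSp (etaExp K (.elim (.var x) u)) K.shape s)
        (.elim (.var x) (u₀.append s₀))
  | .intv a b, hb, x, u, u₀, s, s₀, Γ, hsp, hs, hu => by
      cases hsp with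
      | nil =>
          cases hs
          simp only [etaExp, SpTy.rappSp, append_nil]
          exact .elim .var hu
  | .pi J K₂, hb, x, u, u₀, s, s₀, Γ, hsp, hs, hu => by
      simp only [show (SpKd.pi J K₂).shape = .arr J.shape K₂.shape from rfl] at hsp hb ⊢
      cases hsp with
      | cons hU ht₀ =>
          rename_i U t₀
          cases hs with
          | cons he ht =>
              rename_i e t
              simp only [etaExp, SpTy.shift, shift_var, if_neg (show ¬ x < 0 by omega),
                SpTy.app1, SpTy.appSp, SpTy.rappSp, SpTy.rapp]
              -- the β-reduct of the η-expansion applied to `e`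
              have hW := lemG J (hb.mono (by simp only [SKind.arr.sizeOf_spec]; omega))
                e U Γ he hU
              have hred : WEqTy
                  ((etaExp K₂ (.elim (.var (x+1))
                      ((u.shift 0).append (.cons (etaExp J (.elim (.var 0) .nil)) .nil))))
                    |>.hsubst 0 J.shape e)
                  (etaExp (K₂.hsubst 0 J.shape e) (.elim (.var x)
                    (u.append (.cons ((etaExp J (.elim (.var 0) .nil)).hsubst 0 J.shape e)
                      .nil)))) := by
                refine weqTy_trans (etaExp_hsubst_ne K₂ 0 (x+1) _ J.shape e (by omega)) ?_
                rw [if_pos (show 0 < x + 1 by omega), Nat.add_sub_cancel,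
                  hsubst_append, sp_hsubst_shift_cancel u 0 J.shape e]
                simp only [SpSpine.hsubst]
                exact weqTy_refl _
              refine weqTy_trans
                (weq_rappSp K₂.shape _ _ _ _ hred (weqSp_refl t)) ?_
              have := lemC (K₂.hsubst 0 J.shape e)
                (by rw [shape_hsubst]; exact hb.mono (by simp only [SKind.arr.sizeOf_spec]; omega))
                x (u.append (.cons ((etaExp J (.elim (.var 0) .nil)).hsubst 0 J.shape e) .nil))
                (u₀.append (.cons U .nil)) t t₀ Γ
                (by rw [shape_hsubst]; exact ht₀) ht
                (weqSp_append hu (.cons hW .nil))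
              rw [shape_hsubst] at this
              refine weqTy_trans this ?_
              rw [append_assoc]
              simp only [SpSpine.append]
              exact weqTy_refl _
termination_by K _ _ _ _ _ _ _ _ _ _ => sizeOf K.shape
decreasing_by
  rw [shape_hsubst]; simp only [SpKd.shape, SKind.arr.sizeOf_spec]; omega
abbrev EV (K : SpKd) (x : ℕ) : SpTy := etaExp (K.weaken (x+1)) (.elim (.var x) .nil)

theorem ev_shift (K : SpKd) (x : ℕ) : WEqTy ((EV K x).shift 0) (EV K (x+1)) := by
  refine weqTy_trans (etaExp_shift _ _ 0) ?_
  rw [shift0_weaken]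
  refine weq_etaExp _ _ _ _ rfl ?_
  simp only [SpTy.shift, shift_var, if_neg (show ¬ x < 0 by omega), SpSpine.shift]
  exact weqTy_refl _

theorem lookup_self (δ γ : SCtx) (b : Option SKind) : (δ ++ b :: γ)[δ.length]? = some b := by
  rw [List.getElem?_append_right le_rfl]
  simp

theorem belowAll : ∀ n, Below n := by
  intro n
  induction n using Nat.strong_induction_on with
  | _ n IHn =>
    intro K hK γ δ₀ hwf
    have hb : Below (sizeOf K.shape) := fun K' h => IHn (sizeOf K.shape) hK K' h
    suffices main : ∀ nn : ℕ,
        (∀ (δ : SCtx) (V : SpTy) (j : SKind), sizeOf V ≤ nn →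
          SKTy (δ ++ some K.shape :: γ) V j →
          WEqTy ((V.shift (δ.length + 1)).hsubst δ.length K.shape (EV K δ.length)) V) ∧
        (∀ (δ : SCtx) (J : SpKd), sizeOf J ≤ nn →
          SWfKd (δ ++ some K.shape :: γ) J →
          WEqKd ((J.shift (δ.length + 1)).hsubst δ.length K.shape (EV K δ.length)) J) ∧
        (∀ (δ : SCtx) (s : SpSpine) (j l : SKind), sizeOf s ≤ nn →
          SSp (δ ++ some K.shape :: γ) j s l →
          WEqSp ((s.shift (δ.length + 1)).hsubst δ.length K.shape (EV K δ.length)) s) by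
      exact ⟨fun V j h => (main (sizeOf V)).1 δ₀ V j le_rfl h,
        fun J h => (main (sizeOf J)).2.1 δ₀ J le_rfl h,
        fun s j l h => (main (sizeOf s)).2.2 δ₀ s j l le_rfl h⟩
    intro nn
    induction nn using Nat.strong_induction_on with
    | _ nn IH =>
      refine ⟨?_, ?_, ?_⟩
      · -- types
        intro δ V j hsz hty
        cases hty with
        | top =>
            simp only [SpTy.shift, SpHead.shift, SpSpine.shift, SpTy.hsubst, SpSpine.hsubst]
            exact .elim .top .nil
        | bot =>
            simp only [SpTy.shift, SpHead.shift, SpSpine.shift, SpTy.hsubst, SpSpine.hsubst]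
            exact .elim .bot .nil
        | arr hU hV =>
            rename_i U V'
            simp only [SpTy.elim.sizeOf_spec, SpHead.arr.sizeOf_spec] at hsz
            simp only [SpTy.shift, SpHead.shift, SpSpine.shift, SpTy.hsubst, SpSpine.hsubst]
            exact .elim (.arr ((IH (sizeOf U) (by omega)).1 δ U .star le_rfl hU)
              ((IH (sizeOf V') (by omega)).1 δ V' .star le_rfl hV)) .nil
        | all hK' hV =>
            rename_i K' V'
            simp only [SpTy.elim.sizeOf_spec, SpHead.all.sizeOf_spec] at hsz
            simp only [SpTy.shift, SpHead.shift, SpSpine.shift, SpTy.hsubst, SpSpine.hsubst]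
            refine .elim (.all ((IH (sizeOf K') (by omega)).2.1 δ K' le_rfl hK') ?_) .nil
            refine weqTy_trans
              (weq_hsubstTy _ _ (δ.length+1) K.shape _ _ (weqTy_refl _) (ev_shift K δ.length)) ?_
            exact (IH (sizeOf V') (by omega)).1 (some K'.shape :: δ) V' .star le_rfl hV
        | lam hK' hV =>
            rename_i K' V' k'
            simp only [SpTy.elim.sizeOf_spec, SpHead.lam.sizeOf_spec] at hsz
            simp only [SpTy.shift, SpHead.shift, SpSpine.shift, SpTy.hsubst, SpSpine.hsubst]
            refine .elim (.lam ((shape_hsubst _ _ _ _).trans (shape_shift K' _)) ?_) .nil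
            refine weqTy_trans
              (weq_hsubstTy _ _ (δ.length+1) K.shape _ _ (weqTy_refl _) (ev_shift K δ.length)) ?_
            exact (IH (sizeOf V') (by omega)).1 (some K'.shape :: δ) V' k' le_rfl hV
        | ne hne =>
            cases hne with
            | varApp hlook hsp =>
                rename_i y j₀ s
                simp only [SpTy.elim.sizeOf_spec, SpHead.var.sizeOf_spec] at hsz
                have hsIH := (IH (sizeOf s) (by omega)).2.2 δ s j₀ .star le_rfl hsp
                by_cases hyx : y = δ.length
                · subst hyx
                  rw [lookup_self] at hlook
                  injection hlook with hlook'
                  injection hlook' with hlook''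
                  subst hlook''
                  simp only [SpTy.shift, shift_var,
                    if_pos (show δ.length < δ.length + 1 by omega),
                    SpTy.hsubst, if_pos rfl, ite_true]
                  have hbw : Below (sizeOf (K.weaken (δ.length+1)).shape) := by
                    rw [weaken_shape]; exact hb
                  have := lemC (K.weaken (δ.length+1)) hbw δ.length .nil .nil
                    ((s.shift (δ.length+1)).hsubst δ.length K.shape (EV K δ.length)) s _
                    (by rw [weaken_shape]; exact hsp) hsIH .nil
                  rw [weaken_shape] at this
                  simpa [SpSpine.append] using this
                · rcases Nat.lt_or_ge y δ.length with hlt | hge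
                  · simp only [SpTy.shift, shift_var, if_pos (show y < δ.length + 1 by omega),
                      SpTy.hsubst, if_neg hyx, if_neg (show ¬ δ.length < y by omega)]
                    exact .elim .var hsIH
                  · simp only [SpTy.shift, shift_var,
                      if_neg (show ¬ y < δ.length + 1 by omega), SpTy.hsubst,
                      if_neg (show ¬ y + 1 = δ.length by omega),
                      if_pos (show δ.length < y + 1 by omega), Nat.add_sub_cancel]
                    exact .elim .var hsIH
      · -- kinds
        intro δ J hsz hwfJ
        cases hwfJ with
        | intv hU hV =>
            rename_i U V'
            simp only [SpKd.intv.sizeOf_spec] at hsz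
            simp only [SpKd.shift, SpKd.hsubst]
            exact .intv ((IH (sizeOf U) (by omega)).1 δ U .star le_rfl hU)
              ((IH (sizeOf V') (by omega)).1 δ V' .star le_rfl hV)
        | pi hJ1 hJ2 =>
            rename_i J1 J2
            simp only [SpKd.pi.sizeOf_spec] at hsz
            simp only [SpKd.shift, SpKd.hsubst]
            refine .pi ((IH (sizeOf J1) (by omega)).2.1 δ J1 le_rfl hJ1) ?_
            refine weqKd_trans
              (weq_hsubstKd _ _ (δ.length+1) K.shape _ _ (weqKd_refl _) (ev_shift K δ.length)) ?_
            exact (IH (sizeOf J2) (by omega)).2.1 (some J1.shape :: δ) J2 le_rfl hJ2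
      · -- spines
        intro δ s j l hsz hssp
        cases hssp with
        | nil =>
            simp only [SpSpine.shift, SpSpine.hsubst]
            exact .nil
        | cons hU hs =>
            rename_i U j1 k1 s'
            simp only [SpSpine.cons.sizeOf_spec] at hsz
            simp only [SpSpine.shift, SpSpine.hsubst]
            exact .cons ((IH (sizeOf U) (by omega)).1 δ U j1 le_rfl hU)
              ((IH (sizeOf s') (by omega)).2.2 δ s' k1 l le_rfl hs)
/-- **Hereditary substitution of an η-expanded variable vanishes up to weak
equality**: if `γ ⊢ K kd` simply and `γ, X:|K|, δ ⊢ V : j`, then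
`V[X := η_K(X)]_{|K|} ≈ V`, and analogously for simply well-formed kinds and
spines.  In de Bruijn form, `X` is the index `δ.length`; replacing each
occurrence of `X` by `η_K(X)` while keeping the context is rendered by first
shifting the subject at cutoff `δ.length + 1` and then hereditarily
substituting the η-expansion of the variable `δ.length` (whose kind `K` is
weakened from `γ` to the full context) at that index. -/
theorem hsubst_etaExp_var_vanishes :
    ∀ (γ δ : SCtx) (K : SpKd), SWfKd γ K →
      (∀ (V : SpTy) (j : SKind), SKTy (δ ++ some K.shape :: γ) V j →
        WEqTy ((V.shift (δ.length + 1)).hsubst δ.length K.shape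
            (etaExp (K.weaken (δ.length + 1)) (.elim (.var δ.length) .nil))) V) ∧
      (∀ (J : SpKd), SWfKd (δ ++ some K.shape :: γ) J →
        WEqKd ((J.shift (δ.length + 1)).hsubst δ.length K.shape
            (etaExp (K.weaken (δ.length + 1)) (.elim (.var δ.length) .nil))) J) ∧
      (∀ (s : SpSpine) (j l : SKind), SSp (δ ++ some K.shape :: γ) j s l →
        WEqSp ((s.shift (δ.length + 1)).hsubst δ.length K.shape
            (etaExp (K.weaken (δ.length + 1)) (.elim (.var δ.length) .nil))) s) := by
  intro γ δ K hwf
  exact belowAll (sizeOf K.shape + 1) K (Nat.lt_succ_self _) γ δ hwf
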